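/- Let E = ℝ/2πℤ (the circle) with Haar (arc-length) measure λ normalized so that λ(E) = 2π. Fix α ∈ (π/2, π). For θ ∈ E let A_θ = {θ + ϑ : ϑ ∈ [−α, α]} be the closed arc of half-length α centered at θ, and let P(θ,·) be the uniform probability measure on A_θ, i.e. P(θ,A) = λ(A ∩ A_θ)/(2α) for Borel A ⊆ E. If ν is a (nonnegative Borel) measure on E such that ν(A) ≤ P(θ,A) for every θ ∈ E and every Borel A ⊆ E, then ν = 0. In particular, no nonzero measure is uniformly dominated by all the transition laws P(θ,·), even though each pair P(θ₁,·), P(θ₂,·) admits a common minorizing measure. -/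

import Mathlib

open MeasureTheory

theorem stmt_15 [Fact (0 < 2 * Real.pi)]
    (α : ℝ) (hα : α ∈ Set.Ioo (Real.pi / 2) Real.pi)
    (ν : Measure (AddCircle (2 * Real.pi)))
    (hdom : ∀ (θ : AddCircle (2 * Real.pi)) (A : Set (AddCircle (2 * Real.pi))),
      MeasurableSet A →
      ν A ≤ volume (A ∩ ((fun ϑ : ℝ => θ + (ϑ : AddCircle (2 * Real.pi))) ''
              Set.Icc (-α) α)) / ENNReal.ofReal (2 * α)) :
    ν = 0 := by
  obtain ⟨hα1, hα2⟩ := hα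
  set ε := Real.pi - α with hε
  have hεpos : 0 < ε := by simp [hε]; linarith
  -- each ball of radius ε has ν-measure zero
  have hball : ∀ x : AddCircle (2 * Real.pi), ν (Metric.ball x ε) = 0 := by
    intro x
    have hdisj : Metric.ball x ε ∩
        ((fun ϑ : ℝ => (x + (Real.pi : AddCircle (2 * Real.pi))) + (ϑ : AddCircle (2 * Real.pi))) ''
          Set.Icc (-α) α) = ∅ := by
      rw [Set.eq_empty_iff_forall_notMem]
      rintro z ⟨hz, ⟨ϑ, hϑ, rfl⟩⟩
      rw [Metric.mem_ball] at hz
      have hdist : dist ((x + (Real.pi : AddCircle (2 * Real.pi))) + (ϑ : AddCircle (2 * Real.pi))) x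
          = ‖((Real.pi + ϑ : ℝ) : AddCircle (2 * Real.pi))‖ := by
        rw [dist_eq_norm]
        congr 1
        rw [AddCircle.coe_add]
        abel
      rw [hdist] at hz
      have hnorm : ‖((Real.pi + ϑ : ℝ) : AddCircle (2 * Real.pi))‖
          = |Real.pi + ϑ - round ((2 * Real.pi)⁻¹ * (Real.pi + ϑ)) * (2 * Real.pi)| := AddCircle.norm_eq _
      set k : ℤ := round ((2 * Real.pi)⁻¹ * (Real.pi + ϑ)) with hk
      have hbound : ε ≤ |Real.pi + ϑ - k * (2 * Real.pi)| := by
        rcases le_or_gt (k : ℝ) 0 with h | h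
        · have : ε ≤ Real.pi + ϑ - k * (2 * Real.pi) := by
            have : (k : ℝ) * (2 * Real.pi) ≤ 0 := mul_nonpos_of_nonpos_of_nonneg h (by positivity)
            have hϑ1 := hϑ.1
            simp only [hε] at *
            nlinarith
          linarith [le_abs_self (Real.pi + ϑ - k * (2 * Real.pi))]
        · have hk1 : (1 : ℝ) ≤ k := by exact_mod_cast h
          have : ε ≤ -(Real.pi + ϑ - k * (2 * Real.pi)) := by
            have : 2 * Real.pi ≤ (k : ℝ) * (2 * Real.pi) := le_mul_of_one_le_left (by positivity) hk1
            have hϑ2 := hϑ.2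
            simp only [hε] at *
            nlinarith
          linarith [neg_abs_le (Real.pi + ϑ - k * (2 * Real.pi))]
      rw [hnorm] at hz
      linarith
    have := hdom (x + (Real.pi : AddCircle (2 * Real.pi))) (Metric.ball x ε)
      measurableSet_ball
    rw [hdisj] at this
    simpa using this
  -- cover the circle by countably many such balls
  obtain ⟨s, hsc, hsd⟩ := TopologicalSpace.exists_countable_dense (AddCircle (2 * Real.pi))
  have hcover : (Set.univ : Set (AddCircle (2 * Real.pi))) ⊆ ⋃ x ∈ s, Metric.ball x ε := by
    intro z _
    obtain ⟨x, hx1, hx2⟩ := Metric.dense_iff.mp hsd z ε hεpos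
    exact Set.mem_biUnion hx2 (by simpa [Metric.mem_ball, dist_comm] using hx1)
  have h0 : ν (⋃ x ∈ s, Metric.ball x ε) = 0 :=
    (measure_biUnion_null_iff hsc).mpr fun x _ => hball x
  rw [← Measure.measure_univ_eq_zero]
  exact le_antisymm (le_trans (measure_mono hcover) h0.le) zero_le
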